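/- Let α > -1, let n ≥ 1 be an integer, let η ∈ ℂ with |η| = 1, let φ : 𝔻 → 𝔻 be analytic, and set b = φ(0). If for all z, w ∈ 𝔻, (1 - ηbz)^{n+α+2}·(1 - ηw·φ(z))^{n+α+2} = (1 - ηbw)^{n+α+2}·(1 - η·φ(w)·z)^{n+α+2}, then for all z ∈ 𝔻, φ(z) = b + φ'(0)·z / (1 - ηbz). -/

import Mathlib

open ComplexConjugate

/-- If `(1-ηbz)^{n+α+2}(1-ηw·φ(z))^{n+α+2} = (1-ηbw)^{n+α+2}(1-η·φ(w)·z)^{n+α+2}`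
for all `z, w` in the unit disk, where `b = φ(0)`, then
`φ(z) = b + φ'(0)·z/(1-ηbz)`. -/
theorem stmt5 (α : ℝ) (hα : -1 < α) (n : ℕ) (hn : 1 ≤ n) (η : ℂ)
    (hη : ‖η‖ = 1)
    (φ : ℂ → ℂ)
    (hφ : DifferentiableOn ℂ φ (Metric.ball (0 : ℂ) 1))
    (hφmap : ∀ z ∈ Metric.ball (0 : ℂ) 1, φ z ∈ Metric.ball (0 : ℂ) 1)
    (heq : ∀ z ∈ Metric.ball (0 : ℂ) 1, ∀ w ∈ Metric.ball (0 : ℂ) 1,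
      (1 - η * φ 0 * z) ^ ((n : ℂ) + α + 2) * (1 - η * w * φ z) ^ ((n : ℂ) + α + 2)
        = (1 - η * φ 0 * w) ^ ((n : ℂ) + α + 2) *
            (1 - η * φ w * z) ^ ((n : ℂ) + α + 2)) :
    ∀ z ∈ Metric.ball (0 : ℂ) 1,
      φ z = φ 0 + deriv φ 0 * z / (1 - η * φ 0 * z) := by
  intro z hz
  have h0 : (0 : ℂ) ∈ Metric.ball (0 : ℂ) 1 := by simp
  set s : ℂ := (n : ℂ) + α + 2 with hs_def
  set b : ℂ := φ 0 with hb
  set d : ℂ := deriv φ 0 with hd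
  -- basic facts
  have hsre : 0 < s.re := by
    have : (1 : ℝ) ≤ (n : ℝ) := by exact_mod_cast hn
    simp only [hs_def, Complex.add_re, Complex.natCast_re, Complex.ofReal_re]
    norm_num
    linarith
  have hs0 : s ≠ 0 := by
    intro h
    rw [h] at hsre
    simp at hsre
  have hη0 : η ≠ 0 := by
    intro h
    rw [h] at hη
    simp at hη
  have hzabs : ‖z‖ < 1 := by
    simpa [Complex.dist_eq] using hz
  have hbabs : ‖b‖ < 1 := by
    have := hφmap 0 h0
    simpa [Complex.dist_eq, hb] using this
  have hφzabs : ‖φ z‖ < 1 := by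
    have := hφmap z hz
    simpa [Complex.dist_eq] using this
  -- the key base is in the slit plane
  have hslit : ∀ u : ℂ, ‖u‖ < 1 → (1 - u) ∈ Complex.slitPlane := by
    intro u hu
    rw [Complex.mem_slitPlane_iff]
    left
    have h1 : u.re ≤ ‖u‖ := Complex.re_le_norm u
    simp only [Complex.sub_re, Complex.one_re]
    linarith
  have hAabs : ‖η * b * z‖ < 1 := by
    rw [norm_mul, norm_mul, hη, one_mul]
    calc ‖b‖ * ‖z‖ ≤ 1 * ‖z‖ := by
          apply mul_le_mul_of_nonneg_right (le_of_lt hbabs) (norm_nonneg z)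
      _ = ‖z‖ := one_mul _
      _ < 1 := hzabs
  have hAslit : (1 - η * b * z) ∈ Complex.slitPlane := hslit _ hAabs
  have hAne : (1 - η * b * z) ≠ 0 := Complex.slitPlane_ne_zero hAslit
  have h1slit : (1 : ℂ) ∈ Complex.slitPlane := by
    rw [Complex.mem_slitPlane_iff]; left; norm_num
  -- derivative of φ at 0
  have hφder : HasDerivAt φ d 0 := by
    have := (hφ.differentiableAt (Metric.isOpen_ball.mem_nhds h0))
    exact this.hasDerivAt
  -- LHS function and its derivative at 0
  have hinner1 : HasDerivAt (fun w : ℂ => 1 - η * w * φ z) (-(η * φ z)) 0 := by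
    have h1 : HasDerivAt (fun w : ℂ => η * w * φ z) (η * φ z) 0 := by
      simpa using ((hasDerivAt_id (0 : ℂ)).const_mul η).mul_const (φ z)
    simpa using h1.const_sub 1
  have hg : HasDerivAt (fun w : ℂ => (1 - η * b * z) ^ s * (1 - η * w * φ z) ^ s)
      ((1 - η * b * z) ^ s * (s * (1 : ℂ) ^ (s - 1) * (-(η * φ z)))) 0 := by
    have hc : HasDerivAt (fun w : ℂ => (1 - η * w * φ z) ^ s)
        (s * (1 - η * (0:ℂ) * φ z) ^ (s - 1) * (-(η * φ z))) 0 :=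
      hinner1.cpow_const (by simpa using h1slit)
    simpa using hc.const_mul ((1 - η * b * z) ^ s)
  -- RHS function and its derivative at 0
  have hinner2 : HasDerivAt (fun w : ℂ => 1 - η * b * w) (-(η * b)) 0 := by
    have h1 : HasDerivAt (fun w : ℂ => η * b * w) (η * b) 0 := by
      simpa using (hasDerivAt_id (0 : ℂ)).const_mul (η * b)
    simpa using h1.const_sub 1
  have hinner3 : HasDerivAt (fun w : ℂ => 1 - η * φ w * z) (-(η * d * z)) 0 := by
    have h1 : HasDerivAt (fun w : ℂ => η * φ w * z) (η * d * z) 0 := by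
      simpa [mul_assoc, mul_comm, mul_left_comm] using ((hφder.const_mul η).mul_const z)
    simpa using h1.const_sub 1
  have hf1 : HasDerivAt (fun w : ℂ => (1 - η * b * w) ^ s)
      (s * (1 : ℂ) ^ (s - 1) * (-(η * b))) 0 := by
    have := hinner2.cpow_const (c := s) (by simpa using h1slit)
    simpa using this
  have hf2 : HasDerivAt (fun w : ℂ => (1 - η * φ w * z) ^ s)
      (s * (1 - η * b * z) ^ (s - 1) * (-(η * d * z))) 0 := by
    have := hinner3.cpow_const (c := s) (by simpa [← hb] using hAslit)
    simpa [← hb] using this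
  have hh : HasDerivAt (fun w : ℂ => (1 - η * b * w) ^ s * (1 - η * φ w * z) ^ s)
      ((s * (1 : ℂ) ^ (s - 1) * (-(η * b))) * (1 - η * b * z) ^ s
        + (1 : ℂ) ^ s * (s * (1 - η * b * z) ^ (s - 1) * (-(η * d * z)))) 0 := by
    have := hf1.mul hf2
    simpa [← hb, Pi.mul_def] using this
  -- the two functions agree near 0
  have hev : (fun w : ℂ => (1 - η * b * w) ^ s * (1 - η * φ w * z) ^ s)
      =ᶠ[nhds (0 : ℂ)] (fun w : ℂ => (1 - η * b * z) ^ s * (1 - η * w * φ z) ^ s) := by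
    filter_upwards [Metric.isOpen_ball.mem_nhds h0] with w hw
    exact (heq z hz w hw).symm
  have hder_eq := hg.unique (hh.congr_of_eventuallyEq hev.symm)
  -- simplify
  rw [Complex.one_cpow] at hder_eq
  rw [Complex.one_cpow, one_mul] at hder_eq
  -- A^s = A^(s-1) * A
  have hAs : (1 - η * b * z) ^ s = (1 - η * b * z) ^ (s - 1) * (1 - η * b * z) := by
    have h := Complex.cpow_add (s - 1) 1 hAne
    rw [Complex.cpow_one] at h
    simpa [sub_add_cancel] using h
  rw [hAs] at hder_eq
  have hPne : (1 - η * b * z) ^ (s - 1) ≠ 0 := by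
    rw [Complex.cpow_def_of_ne_zero hAne]
    exact Complex.exp_ne_zero _
  have hfac : -(s * η * (1 - η * b * z) ^ (s - 1)) ≠ 0 := by
    simp [hs0, hη0, hPne]
  have key : φ z * (1 - η * b * z) = b * (1 - η * b * z) + d * z := by
    apply mul_left_cancel₀ hfac
    linear_combination hder_eq
  rw [add_div' _ _ _ hAne, eq_div_iff hAne]
  linear_combination key
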